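/- Suppose the quotient graph 𝔾 has reaches R_1,...,R_m with exclusive parts V_p = R_p \ ∪_{q≠p} R_q, and the full Laplacian satisfies the inter-cluster common influence assumption. Then G contains cluster spanning trees with respect to the clustering if and only if for each p = 1,...,m, all the nodes of ∪_{i∈V_p} C_i can be spanned by a single directed tree in G. -/

import Mathlib

/-- A reach of a digraph `q` on `Fin N`: a maximal reachable set. -/
def IsReach {N : ℕ} (q : Fin N → Fin N → Prop) (S : Set (Fin N)) : Prop :=
  ∃ i, S = {j | Relation.ReflTransGen q i j} ∧
    ∀ j, ¬ ({j' | Relation.ReflTransGen q i j'} ⊂ {j' | Relation.ReflTransGen q j j'})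

private lemma lift_path {L N : ℕ} {adj : Fin L → Fin L → Prop} {c : Fin L → Fin N}
    {qadj : Fin N → Fin N → Prop}
    (hci : ∀ j i, j ≠ i → qadj j i → ∀ v, c v = i → ∃ k, c k = j ∧ adj k v)
    {j i : Fin N} (h : Relation.ReflTransGen qadj j i) :
    ∀ v, c v = i → ∃ k, c k = j ∧ Relation.ReflTransGen adj k v := by
  induction h with
  | refl => exact fun v hv => ⟨v, hv, Relation.ReflTransGen.refl⟩
  | @tail b i' hjb hbi ih =>
    intro v hv
    by_cases hbe : b = i'
    · subst hbe; exact ih v hv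
    · obtain ⟨k', hk', hadj⟩ := hci b i' hbe hbi v hv
      obtain ⟨k, hk, hpath⟩ := ih k' hk'
      exact ⟨k, hk, hpath.tail hadj⟩

/-- Suppose the quotient graph has reaches `R 1, ..., R m` with exclusive
parts `V p = R p \ ⋃_{q ≠ p} R q`, and the full Laplacian satisfies the inter-cluster
common influence assumption. Then `G` contains cluster spanning trees w.r.t. the
clustering iff for each `p`, all the nodes of `⋃_{i ∈ V p} C_i` can be spanned by a
single directed tree in `G`. -/
theorem stmt12 (L N m : ℕ) (adj : Fin L → Fin L → Prop)
    (c : Fin L → Fin N) (hc : Function.Surjective c)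
    (qadj : Fin N → Fin N → Prop)
    (hq : ∀ j i, qadj j i ↔ ∃ k l, c k = j ∧ c l = i ∧ adj k l)
    (hci : ∀ j i, j ≠ i → qadj j i → ∀ v, c v = i → ∃ k, c k = j ∧ adj k v)
    (R : Fin m → Set (Fin N))
    (hreach : ∀ p, IsReach qadj (R p))
    (hinj : Function.Injective R)
    (hall : ∀ S : Set (Fin N), IsReach qadj S → ∃ p, S = R p) :
    (∀ i, ∃ r, ∀ v, c v = i → Relation.ReflTransGen adj r v) ↔
    (∀ p, ∃ r, ∀ v, (c v ∈ R p ∧ ∀ q, q ≠ p → c v ∉ R q) →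
        Relation.ReflTransGen adj r v) := by
  constructor
  · intro h p
    obtain ⟨ip, hRp, _⟩ := hreach p
    obtain ⟨r, hr⟩ := h ip
    refine ⟨r, fun v hv => ?_⟩
    have hv1 : c v ∈ R p := hv.1
    rw [hRp] at hv1
    obtain ⟨k, hk, hkv⟩ := lift_path hci hv1 v rfl
    exact (hr k hk).trans hkv
  · intro h i
    set f : Fin N → Set (Fin N) := fun j => {j' | Relation.ReflTransGen qadj j j'} with hf
    have hfin : ({j | i ∈ f j} : Set (Fin N)).Finite := Set.toFinite _
    have hne : ({j | i ∈ f j} : Set (Fin N)).Nonempty :=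
      ⟨i, Relation.ReflTransGen.refl⟩
    obtain ⟨j, hj, hmax0⟩ := hfin.exists_maximalFor f _ hne
    have hmax : ∀ a' ∈ ({j | i ∈ f j} : Set (Fin N)), f j ≤ f a' → f j = f a' :=
      fun a' ha h => le_antisymm h (hmax0 ha h)
    have hrj : IsReach qadj (f j) := by
      refine ⟨j, rfl, fun j' hss => ?_⟩
      have hij' : i ∈ f j' := hss.1 hj
      exact hss.2 (le_of_eq (hmax j' hij' hss.1).symm)
    obtain ⟨p, hp⟩ := hall _ hrj
    obtain ⟨ip, hRp, hmaxp⟩ := hreach p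
    obtain ⟨r, hr⟩ := h p
    have hipVp : ∀ q, q ≠ p → ip ∉ R q := by
      intro q hqp hipq
      obtain ⟨iq, hRq, _⟩ := hreach q
      rw [hRq] at hipq
      have hsub : {j' | Relation.ReflTransGen qadj ip j'} ⊆
          {j' | Relation.ReflTransGen qadj iq j'} := fun x hx => hipq.trans hx
      have heq : {j' | Relation.ReflTransGen qadj ip j'} =
          {j' | Relation.ReflTransGen qadj iq j'} := by
        by_contra hne'
        exact hmaxp iq ⟨hsub, fun habs => hne' (subset_antisymm hsub habs)⟩
      exact hqp (hinj (by rw [hRp, hRq, heq]))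
    have hiRp : i ∈ R p := by rw [← hp]; exact hj
    rw [hRp] at hiRp
    refine ⟨r, fun v hv => ?_⟩
    obtain ⟨k, hk, hkv⟩ := lift_path hci hiRp v hv
    have hrk : Relation.ReflTransGen adj r k := by
      apply hr
      constructor
      · rw [hk, hRp]; exact Relation.ReflTransGen.refl
      · intro q hqp; rw [hk]; exact hipVp q hqp
    exact hrk.trans hkv
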